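/- arXiv:2008.10983 — 5 statements merged into one kernel-verified Lean document; each statement's English description precedes it below -/
import Mathlib

section
/- Let g(s) = (ζs − k)/(s³ + ps² + qs + ℓ) with real parameters ζ, k, p, q, ℓ, where k ≠ 0, ℓ ≠ 0, the numerator and denominator are coprime, the denominator has no roots on the imaginary axis, and q² < 2pℓ. Then sup_{ω∈ℝ} |g(iω)| is attained at some frequency ω_p with ω_p ≠ 0, and |g(iω_p)| > |g(0)|. -/
open Polynomial

/-- Evaluation of the real rational function `n/d` at a complex argument. -/
noncomputable def ratEval (n d : Polynomial ℝ) (s : ℂ) : ℂ :=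
  (n.map (algebraMap ℝ ℂ)).eval s / (d.map (algebraMap ℝ ℂ)).eval s

/-- All complex poles of `δ = b/a` (i.e. roots of `a`) have negative real part. -/
def StableRat (a : Polynomial ℝ) : Prop :=
  ∀ z : ℂ, (a.map (algebraMap ℝ ℂ)).eval z = 0 → z.re < 0

/-- `δ = b/a` is a proper stable real rational function that internally stabilizes
`g = n/d` under positive feedback: every root of `a d − b n` has negative real part. -/
def Stabilizes (b a n d : Polynomial ℝ) : Prop :=
  a ≠ 0 ∧ IsCoprime b a ∧ b.degree ≤ a.degree ∧ StableRat a ∧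
    ∀ z : ℂ, ((a * d - b * n).map (algebraMap ℝ ℂ)).eval z = 0 → z.re < 0

/-- `sup_{ω ∈ ℝ} |g(iω)|` for `g = n/d`. -/
noncomputable def hinfNorm (n d : Polynomial ℝ) : ℝ :=
  ⨆ ω : ℝ, ‖ratEval n d (ω * Complex.I)‖

/-- Number of poles (roots of `d`), with multiplicity, in the open right half plane. -/
noncomputable def orhpCount (d : Polynomial ℝ) : ℕ :=
  Multiset.card ((d.map (algebraMap ℝ ℂ)).roots.filter (fun z => 0 < z.re))

/-- Robust instability radius of `g = n/d`: infimum of `‖δ‖_{H∞}` over `δ ∈ S(g)`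
(`+∞` if `S(g)` is empty). -/
noncomputable def RIR (n d : Polynomial ℝ) : ENNReal :=
  sInf { r : ENNReal | ∃ b a : Polynomial ℝ,
    Stabilizes b a n d ∧ r = ENNReal.ofReal (hinfNorm b a) }

/-- `μ(e)` : infimum of `‖δ‖_{H∞}` over `δ ∈ S(g)` with `δ(0) = e`. -/
noncomputable def Mu (n d : Polynomial ℝ) (e : ℝ) : ENNReal :=
  sInf { r : ENNReal | ∃ b a : Polynomial ℝ,
    Stabilizes b a n d ∧ b.eval 0 / a.eval 0 = e ∧ r = ENNReal.ofReal (hinfNorm b a) }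

/-- The characteristic polynomial `chp` achieves `ω_c`-stability: simple root at `iω_c`
(and at `−iω_c` when `ω_c ≠ 0`), all other roots with negative real part. -/
def OmegaStable (chp : Polynomial ℝ) (ωc : ℝ) : Prop :=
  Polynomial.rootMultiplicity ((ωc : ℂ) * Complex.I) (chp.map (algebraMap ℝ ℂ)) = 1 ∧
  (ωc ≠ 0 → Polynomial.rootMultiplicity (-((ωc : ℂ) * Complex.I)) (chp.map (algebraMap ℝ ℂ)) = 1) ∧
  ∀ z : ℂ, (chp.map (algebraMap ℝ ℂ)).eval z = 0 →
    z ≠ (ωc : ℂ) * Complex.I → z ≠ -((ωc : ℂ) * Complex.I) → z.re < 0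

/-- Numerator `ζs − k` of the third order transfer function. -/
noncomputable def numer3 (ζ k : ℝ) : Polynomial ℝ :=
  Polynomial.C ζ * Polynomial.X - Polynomial.C k

/-- Denominator `s³ + ps² + qs + ℓ` of the third order transfer function. -/
noncomputable def denom3 (p q ℓ : ℝ) : Polynomial ℝ :=
  Polynomial.X ^ 3 + Polynomial.C p * Polynomial.X ^ 2 + Polynomial.C q * Polynomial.X +
    Polynomial.C ℓ

open Filter Topology in
/-- for `g(s) = (ζs − k)/(s³ + ps² + qs + ℓ)` with `k ≠ 0`, `ℓ ≠ 0`, no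
imaginary-axis poles and `q² < 2pℓ`, the sup of `|g(iω)|` is attained at some
`ω_p ≠ 0`, and `|g(iω_p)| > |g(0)|`. -/
theorem stmt10 (ζ k p q ℓ : ℝ) (hk : k ≠ 0) (hℓ : ℓ ≠ 0)
    (hcop : IsCoprime (numer3 ζ k) (denom3 p q ℓ))
    (hnoimag : ∀ z : ℂ, ((denom3 p q ℓ).map (algebraMap ℝ ℂ)).eval z = 0 → z.re ≠ 0)
    (hq : q ^ 2 < 2 * p * ℓ) :
    ∃ ωp : ℝ, ωp ≠ 0 ∧
      ‖ratEval (numer3 ζ k) (denom3 p q ℓ) ((ωp : ℂ) * Complex.I)‖ =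
        hinfNorm (numer3 ζ k) (denom3 p q ℓ) ∧
      ‖ratEval (numer3 ζ k) (denom3 p q ℓ) 0‖ <
        ‖ratEval (numer3 ζ k) (denom3 p q ℓ) ((ωp : ℂ) * Complex.I)‖ := by
  have h3 : Complex.I ^ 3 = -Complex.I := by
    rw [pow_succ, Complex.I_sq]; ring
  -- numerator and denominator evaluations
  have hne : ∀ ω : ℝ, ((numer3 ζ k).map (algebraMap ℝ ℂ)).eval ((ω:ℂ) * Complex.I)
      = ((-k : ℝ) : ℂ) + ((ζ*ω : ℝ) : ℂ) * Complex.I := by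
    intro ω; simp [numer3]; push_cast; ring
  have hde : ∀ ω : ℝ, ((denom3 p q ℓ).map (algebraMap ℝ ℂ)).eval ((ω:ℂ) * Complex.I)
      = ((ℓ - p*ω^2 : ℝ) : ℂ) + ((q*ω - ω^3 : ℝ) : ℂ) * Complex.I := by
    intro ω; simp [denom3]; push_cast; ring_nf; simp only [h3, Complex.I_sq]; ring
  set N : ℝ → ℝ := fun ω => k^2 + ζ^2*ω^2 with hN
  set D : ℝ → ℝ := fun ω => (ℓ - p*ω^2)^2 + (q*ω - ω^3)^2 with hD
  have hNnn : ∀ ω, 0 ≤ N ω := fun ω => by positivity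
  have hDpos : ∀ ω : ℝ, 0 < D ω := by
    intro ω
    have hdz : ((denom3 p q ℓ).map (algebraMap ℝ ℂ)).eval ((ω:ℂ) * Complex.I) ≠ 0 := by
      intro h
      exact hnoimag _ h (by simp)
    have := Complex.normSq_pos.mpr hdz
    rwa [hde ω, Complex.normSq_add_mul_I] at this
  set φ : ℝ → ℝ := fun ω => N ω / D ω with hφ
  have hφnn : ∀ ω, 0 ≤ φ ω := fun ω => div_nonneg (hNnn ω) (hDpos ω).le
  set F : ℝ → ℝ := fun ω => ‖ratEval (numer3 ζ k) (denom3 p q ℓ) ((ω:ℂ) * Complex.I)‖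
    with hFdef
  have hF : ∀ ω, F ω = Real.sqrt (φ ω) := by
    intro ω
    rw [hFdef]
    simp only [ratEval, Complex.norm_def, map_div₀ Complex.normSq]
    rw [hne ω, hde ω, Complex.normSq_add_mul_I, Complex.normSq_add_mul_I]
    congr 1
    simp only [hφ, hN, hD]
    ring_nf
  -- φ is continuous
  have hcont : Continuous φ := by
    apply Continuous.div (by fun_prop) (by fun_prop)
    exact fun ω => (hDpos ω).ne'
  -- there is ω0 ≠ 0 with φ 0 < φ ω0
  set c : ℝ := ζ^2*ℓ^2 + k^2*(2*p*ℓ - q^2) with hc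
  have hcpos : 0 < c := by
    have hk2 : 0 < k^2 := pow_two_pos_of_ne_zero hk
    nlinarith [sq_nonneg (ζ*ℓ)]
  set hfun : ℝ → ℝ := fun ω => c - k^2*(p^2-2*q)*ω^2 - k^2*ω^4 with hhfun
  have hfc : Continuous hfun := by fun_prop
  have hev : ∀ᶠ ω in 𝓝[≠] (0:ℝ), 0 < hfun ω := by
    apply Filter.Eventually.filter_mono nhdsWithin_le_nhds
    have h0 : hfun 0 = c := by simp [hhfun]
    exact ContinuousAt.eventually_lt (f := fun _ => (0:ℝ)) continuousAt_const
      hfc.continuousAt (by simpa [h0] using hcpos)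
  obtain ⟨ω0, hω0pos, hω0mem⟩ := (hev.and eventually_mem_nhdsWithin).exists
  have hω0ne : ω0 ≠ 0 := hω0mem
  have hω0sq : 0 < ω0^2 := pow_two_pos_of_ne_zero hω0ne
  have hφ0 : φ 0 < φ ω0 := by
    rw [hφ, div_lt_div_iff₀ (hDpos 0) (hDpos ω0)]
    have key : N ω0 * D 0 - N 0 * D ω0 = ω0^2 * hfun ω0 := by
      simp only [hN, hD, hhfun, hc]; ring
    nlinarith [mul_pos hω0sq hω0pos]
  -- φ tends to 0 at cocompact
  have htends : Tendsto φ (cocompact ℝ) (𝓝 0) := by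
    set PN : Polynomial ℝ := Polynomial.C (ζ^2) * Polynomial.X^2 + Polynomial.C (k^2) with hPN
    set PD : Polynomial ℝ := Polynomial.X^6 + Polynomial.C (p^2-2*q) * Polynomial.X^4
      + Polynomial.C (q^2 - 2*p*ℓ) * Polynomial.X^2 + Polynomial.C (ℓ^2) with hPD
    have heval : ∀ ω : ℝ, φ ω = PN.eval ω / PD.eval ω := by
      intro ω
      simp only [hφ, hN, hD, hPN, hPD]
      simp only [Polynomial.eval_add, Polynomial.eval_mul, Polynomial.eval_pow,
        Polynomial.eval_C, Polynomial.eval_X]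
      congr 1 <;> ring
    have hdeg : PN.degree < PD.degree := by
      have h1 : PN.degree ≤ 2 := by rw [hPN]; compute_degree
      have h2 : PD.degree = 6 := by rw [hPD]; compute_degree!
      rw [h2]
      exact lt_of_le_of_lt h1 (by norm_num)
    have htop : Tendsto φ atTop (𝓝 0) := by
      have := Polynomial.div_tendsto_zero_of_degree_lt PN PD hdeg
      exact this.congr fun ω => (heval ω).symm
    have heven : ∀ ω : ℝ, φ (-ω) = φ ω := by
      intro ω; simp only [hφ, hN, hD]; congr 1 <;> ring
    have hbot : Tendsto φ atBot (𝓝 0) := by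
      have := htop.comp tendsto_neg_atBot_atTop
      exact this.congr fun ω => heven ω
    rw [cocompact_eq_atBot_atTop]
    exact hbot.sup htop
  -- global maximum
  have hevle : ∀ᶠ ω in cocompact ℝ, φ ω ≤ φ ω0 := by
    have h0le : (0:ℝ) < φ ω0 := lt_of_le_of_lt (hφnn 0) hφ0
    filter_upwards [htends.eventually (eventually_lt_nhds h0le)] with ω hω using hω.le
  obtain ⟨ωp, hωp⟩ := hcont.exists_forall_ge' ω0 hevle
  have hφp : φ 0 < φ ωp := lt_of_lt_of_le hφ0 (hωp ω0)
  have hωpne : ωp ≠ 0 := by rintro rfl; exact absurd hφp (lt_irrefl _)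
  refine ⟨ωp, hωpne, ?_, ?_⟩
  · -- F ωp = hinfNorm
    have hbd : ∀ ω, F ω ≤ F ωp := by
      intro ω; rw [hF, hF]; exact Real.sqrt_le_sqrt (hωp ω)
    have hbdd : BddAbove (Set.range F) := ⟨F ωp, by rintro _ ⟨ω, rfl⟩; exact hbd ω⟩
    exact le_antisymm (le_ciSup hbdd ωp) (ciSup_le hbd)
  · -- strict inequality at 0
    have h00 : ratEval (numer3 ζ k) (denom3 p q ℓ) 0
        = ratEval (numer3 ζ k) (denom3 p q ℓ) (((0:ℝ):ℂ) * Complex.I) := by norm_num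
    rw [h00]
    show F 0 < F ωp
    rw [hF, hF]
    exact Real.sqrt_lt_sqrt (hφnn 0) hφp
end

section
/- Let f₂ ∈ ℝ, f₁ > 0, f₀ > 0, ζ ∈ ℝ, and k ≠ 0, and define F : [0, ∞) → ℝ by F(Ω) := (Ω³ + f₂Ω² − f₁Ω + f₀)/(ζ²Ω + k²). Then the cubic H(Ω) := 2ζ²Ω³ + (ζ²f₂ + 3k²)Ω² + 2k²f₂Ω − (ζ²f₀ + k²f₁) has exactly one positive real root Ω_p, the function F attains its global minimum over [0, ∞) at the unique point Ω_p, and F(Ω_p) < F(0). -/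
/-- `F(Ω) = (Ω³ + f₂Ω² − f₁Ω + f₀)/(ζ²Ω + k²)`. -/
noncomputable def Ffun (f₂ f₁ f₀ ζ k : ℝ) (Ω : ℝ) : ℝ :=
  (Ω ^ 3 + f₂ * Ω ^ 2 - f₁ * Ω + f₀) / (ζ ^ 2 * Ω + k ^ 2)

/-- `H(Ω) = 2ζ²Ω³ + (ζ²f₂ + 3k²)Ω² + 2k²f₂Ω − (ζ²f₀ + k²f₁)`, the numerator of `F'`. -/
def Hfun (f₂ f₁ f₀ ζ k : ℝ) (Ω : ℝ) : ℝ :=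
  2 * ζ ^ 2 * Ω ^ 3 + (ζ ^ 2 * f₂ + 3 * k ^ 2) * Ω ^ 2 + 2 * k ^ 2 * f₂ * Ω -
    (ζ ^ 2 * f₀ + k ^ 2 * f₁)

/-- Key monotonicity: `H(Ω)/(Ω(ζ²Ω+2k²))` is strictly increasing on `(0,∞)`. -/
lemma Hkey (f₂ f₁ f₀ ζ k : ℝ) (hf₁ : 0 < f₁) (hf₀ : 0 < f₀) (hk : k ≠ 0)
    {a b : ℝ} (ha : 0 < a) (hab : a < b) :
    Hfun f₂ f₁ f₀ ζ k a * (b * (ζ ^ 2 * b + 2 * k ^ 2)) <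
      Hfun f₂ f₁ f₀ ζ k b * (a * (ζ ^ 2 * a + 2 * k ^ 2)) := by
  have hb : 0 < b := ha.trans hab
  have ht : 0 < k ^ 2 := by positivity
  have hs : 0 ≤ ζ ^ 2 := sq_nonneg ζ
  have hc : 0 < ζ ^ 2 * f₀ + k ^ 2 * f₁ := by positivity
  have hE : Hfun f₂ f₁ f₀ ζ k b * (a * (ζ ^ 2 * a + 2 * k ^ 2)) -
      Hfun f₂ f₁ f₀ ζ k a * (b * (ζ ^ 2 * b + 2 * k ^ 2)) =
      (b - a) * (2 * (ζ ^ 2) ^ 2 * a ^ 2 * b ^ 2 + 4 * ζ ^ 2 * k ^ 2 * (a * b) * (a + b) +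
        6 * (k ^ 2) ^ 2 * (a * b) + (ζ ^ 2 * f₀ + k ^ 2 * f₁) * (ζ ^ 2 * (a + b) + 2 * k ^ 2)) := by
    unfold Hfun; ring
  nlinarith [mul_pos ha hb, mul_pos (mul_pos ha hb) (mul_pos ht ht),
    mul_nonneg (mul_nonneg (mul_nonneg hs ht.le) (mul_pos ha hb).le) (by linarith : (0:ℝ) < a + b).le,
    mul_nonneg (mul_nonneg hs hs) (mul_nonneg (sq_nonneg a) (sq_nonneg b)),
    mul_pos hc (by nlinarith : (0:ℝ) < ζ ^ 2 * (a + b) + 2 * k ^ 2),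
    sub_pos.mpr hab]

lemma Fderiv (f₂ f₁ f₀ ζ k : ℝ) {Ω : ℝ} (h : ζ ^ 2 * Ω + k ^ 2 ≠ 0) :
    HasDerivAt (Ffun f₂ f₁ f₀ ζ k) (Hfun f₂ f₁ f₀ ζ k Ω / (ζ ^ 2 * Ω + k ^ 2) ^ 2) Ω := by
  have hN : HasDerivAt (fun x : ℝ => x ^ 3 + f₂ * x ^ 2 - f₁ * x + f₀)
      (3 * Ω ^ 2 + 2 * f₂ * Ω - f₁) Ω := by
    have h1 : HasDerivAt (fun x : ℝ => x ^ 3) ((3 : ℕ) * Ω ^ 2) Ω := by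
      simpa using hasDerivAt_pow 3 Ω
    have h2 : HasDerivAt (fun x : ℝ => x ^ 2) ((2 : ℕ) * Ω ^ 1) Ω := hasDerivAt_pow 2 Ω
    have := ((h1.add (h2.const_mul f₂)).sub ((hasDerivAt_id Ω).const_mul f₁)).add_const f₀
    refine this.congr_deriv ?_
    push_cast; ring
  have hD : HasDerivAt (fun x : ℝ => ζ ^ 2 * x + k ^ 2) (ζ ^ 2) Ω := by
    simpa using ((hasDerivAt_id Ω).const_mul (ζ ^ 2)).add_const (k ^ 2)
  have := hN.div hD h
  refine this.congr_deriv ?_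
  unfold Hfun
  rw [div_eq_div_iff (by positivity) (by positivity)]
  ring

/-- `H` has exactly one positive real root `Ω_p`, `F` attains its global
minimum over `[0,∞)` uniquely at `Ω_p`, and `F(Ω_p) < F(0)`. -/
theorem stmt12 (f₂ f₁ f₀ ζ k : ℝ) (hf₁ : 0 < f₁) (hf₀ : 0 < f₀) (hk : k ≠ 0) :
    ∃ Ωp : ℝ, 0 < Ωp ∧ Hfun f₂ f₁ f₀ ζ k Ωp = 0 ∧
      (∀ Ω : ℝ, 0 < Ω → Hfun f₂ f₁ f₀ ζ k Ω = 0 → Ω = Ωp) ∧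
      (∀ Ω : ℝ, 0 ≤ Ω → Ffun f₂ f₁ f₀ ζ k Ωp ≤ Ffun f₂ f₁ f₀ ζ k Ω) ∧
      (∀ Ω : ℝ, 0 ≤ Ω → Ω ≠ Ωp → Ffun f₂ f₁ f₀ ζ k Ωp < Ffun f₂ f₁ f₀ ζ k Ω) ∧
      Ffun f₂ f₁ f₀ ζ k Ωp < Ffun f₂ f₁ f₀ ζ k 0 := by
  have ht : 0 < k ^ 2 := by positivity
  have hsq : (0:ℝ) ≤ ζ ^ 2 := sq_nonneg ζ
  have hc : 0 < ζ ^ 2 * f₀ + k ^ 2 * f₁ := by positivity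
  have hH0 : Hfun f₂ f₁ f₀ ζ k 0 < 0 := by
    simp only [Hfun]; nlinarith
  set M : ℝ := |f₂| + (ζ ^ 2 * f₀ + k ^ 2 * f₁) / k ^ 2 + 1 with hMdef
  have hdivpos : 0 < (ζ ^ 2 * f₀ + k ^ 2 * f₁) / k ^ 2 := div_pos hc ht
  have hMabs : |f₂| ≤ M := by simp only [hMdef]; linarith
  have hM1 : (1:ℝ) ≤ M := by simp only [hMdef]; linarith [abs_nonneg f₂]
  have hM0 : (0:ℝ) < M := by linarith
  have hcM : ζ ^ 2 * f₀ + k ^ 2 * f₁ ≤ (M - 1) * k ^ 2 := by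
    have h1 : (ζ ^ 2 * f₀ + k ^ 2 * f₁) / k ^ 2 ≤ M - 1 := by
      simp only [hMdef]; linarith [abs_nonneg f₂]
    exact (div_le_iff₀ ht).mp h1
  have hHM : 0 < Hfun f₂ f₁ f₀ ζ k M := by
    have h2Mf : 0 ≤ 2 * M + f₂ := by linarith [neg_abs_le f₂]
    have hMf : 0 ≤ M + f₂ := by linarith [neg_abs_le f₂]
    simp only [Hfun]
    nlinarith [mul_nonneg (mul_nonneg hsq (sq_nonneg M)) h2Mf,
      mul_nonneg (mul_nonneg ht.le hM0.le) hMf,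
      mul_nonneg (mul_nonneg ht.le hM0.le) (by linarith : (0:ℝ) ≤ M - 1)]
  have hHcont : Continuous (Hfun f₂ f₁ f₀ ζ k) := by
    unfold Hfun; fun_prop
  obtain ⟨Ωp, hΩpmem, hHΩp⟩ :=
    intermediate_value_Icc hM0.le hHcont.continuousOn ⟨hH0.le, hHM.le⟩
  have hΩp0 : 0 < Ωp := by
    rcases eq_or_lt_of_le hΩpmem.1 with h | h
    · exfalso; rw [← h] at hHΩp; linarith
    · exact h
  have hP : ∀ x : ℝ, 0 < x → 0 < x * (ζ ^ 2 * x + 2 * k ^ 2) := by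
    intro x hx; have : 0 < ζ ^ 2 * x + 2 * k ^ 2 := by nlinarith
    exact mul_pos hx this
  have hneg : ∀ Ω : ℝ, 0 < Ω → Ω < Ωp → Hfun f₂ f₁ f₀ ζ k Ω < 0 := by
    intro Ω h1 h2
    have hkey := Hkey f₂ f₁ f₀ ζ k hf₁ hf₀ hk h1 h2
    rw [hHΩp] at hkey
    by_contra hx; push_neg at hx
    nlinarith [hP Ωp hΩp0, mul_nonneg hx (hP Ωp hΩp0).le]
  have hpos : ∀ Ω : ℝ, Ωp < Ω → 0 < Hfun f₂ f₁ f₀ ζ k Ω := by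
    intro Ω h2
    have hkey := Hkey f₂ f₁ f₀ ζ k hf₁ hf₀ hk hΩp0 h2
    rw [hHΩp] at hkey
    by_contra hx; push_neg at hx
    nlinarith [hP Ωp hΩp0, mul_nonneg (neg_nonneg.mpr hx) (hP Ωp hΩp0).le]
  have hDpos : ∀ x : ℝ, 0 ≤ x → 0 < ζ ^ 2 * x + k ^ 2 := by
    intro x hx; nlinarith [mul_nonneg hsq hx]
  have hFcont : ContinuousOn (Ffun f₂ f₁ f₀ ζ k) (Set.Ici 0) := by
    apply ContinuousOn.div (by fun_prop) (by fun_prop)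
    intro x hx; exact (hDpos x hx).ne'
  have hA : StrictAntiOn (Ffun f₂ f₁ f₀ ζ k) (Set.Icc 0 Ωp) := by
    apply strictAntiOn_of_deriv_neg (convex_Icc 0 Ωp)
      (hFcont.mono Set.Icc_subset_Ici_self)
    intro x hx
    rw [interior_Icc] at hx
    rw [(Fderiv f₂ f₁ f₀ ζ k (hDpos x hx.1.le).ne').deriv]
    exact div_neg_of_neg_of_pos (hneg x hx.1 hx.2) (pow_pos (hDpos x hx.1.le) 2)
  have hB : StrictMonoOn (Ffun f₂ f₁ f₀ ζ k) (Set.Ici Ωp) := by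
    apply strictMonoOn_of_deriv_pos (convex_Ici Ωp)
      (hFcont.mono (Set.Ici_subset_Ici.mpr hΩp0.le))
    intro x hx
    rw [interior_Ici] at hx
    have hx0 : 0 ≤ x := le_of_lt (hΩp0.trans hx)
    rw [(Fderiv f₂ f₁ f₀ ζ k (hDpos x hx0).ne').deriv]
    exact div_pos (hpos x hx) (pow_pos (hDpos x hx0) 2)
  have hstrict : ∀ Ω : ℝ, 0 ≤ Ω → Ω ≠ Ωp →
      Ffun f₂ f₁ f₀ ζ k Ωp < Ffun f₂ f₁ f₀ ζ k Ω := by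
    intro Ω hΩ hne
    rcases lt_or_gt_of_ne hne with h | h
    · exact hA ⟨hΩ, h.le⟩ ⟨hΩp0.le, le_refl _⟩ h
    · exact hB (Set.self_mem_Ici) h.le h
  refine ⟨Ωp, hΩp0, hHΩp, ?_, ?_, hstrict, hstrict 0 le_rfl hΩp0.ne⟩
  · intro Ω hΩ hHΩ
    by_contra hne
    rcases lt_or_gt_of_ne hne with h | h
    · exact absurd hHΩ (hneg Ω hΩ h).ne
    · exact absurd hHΩ (hpos Ω h).ne'
  · intro Ω hΩ
    by_cases h : Ω = Ωp
    · rw [h]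
    · exact (hstrict Ω hΩ h).le
end

section
/- Let γ ∈ ℝ and let ℓ(s) = n_ℓ(s)/d_ℓ(s) (coprime real polynomials) be a strictly proper real rational function with an even number (counted with multiplicity) of poles with positive real part and no poles on the imaginary axis. Suppose every root of d_ℓ(s) − n_ℓ(s) has negative real part, |γ| < 1, and sup_{ω∈ℝ} |γ ℓ(iω)| < 1. Then there exists ξ₀ > 0 such that for every ξ ∈ (0, ξ₀), every root of the polynomial (s + ξ)d_ℓ(s) − (s + ξγ)n_ℓ(s) — the characteristic polynomial of 1 = f(s)ℓ(s) with the high-pass filter f(s) := (s + ξγ)/(s + ξ) — has negative real part. -/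
open Polynomial

namespace Stmt15Aux


/-- explicit per-root constant -/
noncomputable def rc (r : ℂ) : ℝ := min ((-r.re) / (2 * (1 + ‖r‖))) (1/2)

lemma rc_pos {r : ℂ} (hr : r.re < 0) : 0 < rc r := by
  have h1 : (0:ℝ) < 1 + ‖r‖ := by positivity
  apply lt_min
  · apply div_pos (by linarith) (by positivity)
  · norm_num

lemma rc_key {r : ℂ} (hr : r.re < 0) {z : ℂ} (hz : 0 ≤ z.re) :
    rc r * (1 + ‖z‖) ≤ ‖z - r‖ := by
  have habsr : (0:ℝ) ≤ ‖r‖ := norm_nonneg r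
  have habsz : (0:ℝ) ≤ ‖z‖ := norm_nonneg z
  rcases le_or_gt (1 + ‖z‖) (2 * (1 + ‖r‖)) with h | h
  · have h1 : rc r * (1 + ‖z‖) ≤
        ((-r.re) / (2 * (1 + ‖r‖))) * (2 * (1 + ‖r‖)) := by
      apply mul_le_mul (min_le_left _ _) h (by positivity)
      apply le_of_lt; apply div_pos (by linarith) (by positivity)
    have h2 : (-r.re) / (2 * (1 + ‖r‖)) * (2 * (1 + ‖r‖)) = -r.re := by
      field_simp
    have h3 : -r.re ≤ (z - r).re := by
      simp only [Complex.sub_re]; linarith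
    calc rc r * (1 + ‖z‖) ≤ -r.re := by rw [← h2]; exact h1
      _ ≤ (z - r).re := h3
      _ ≤ |(z - r).re| := le_abs_self _
      _ ≤ ‖z - r‖ := Complex.abs_re_le_norm _
  · have h2 : ‖z‖ - ‖r‖ ≤ ‖z - r‖ := by
      simpa using norm_sub_norm_le z r
    have h1 : rc r * (1 + ‖z‖) ≤ (1/2) * (1 + ‖z‖) :=
      mul_le_mul_of_nonneg_right (min_le_right _ _) (by positivity)
    linarith

lemma prod_rc_le {T : Multiset ℂ} (hT : ∀ r ∈ T, r.re < 0) {z : ℂ} (hz : 0 ≤ z.re) :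
    (T.map rc).prod * (1 + ‖z‖) ^ Multiset.card T
      ≤ (T.map (fun r => ‖z - r‖)).prod := by
  have key := Multiset.prod_map_le_prod_map₀ (s := T)
      (fun r => rc r * (1 + ‖z‖)) (fun r => ‖z - r‖)
      (fun r hr => mul_nonneg (rc_pos (hT r hr)).le (by positivity))
      (fun r hr => rc_key (hT r hr) hz)
  rw [Multiset.prod_map_mul] at key
  simpa [Multiset.map_const', Multiset.prod_replicate] using key

/-- E1 : lower bound on the closed right half plane for a polynomial with OLHP roots. -/
lemma eval_lower_rhp {P : Polynomial ℂ} (hP : P ≠ 0) (hroots : ∀ r ∈ P.roots, r.re < 0) :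
    ∃ c : ℝ, 0 < c ∧ ∀ z : ℂ, 0 ≤ z.re →
      c * (1 + ‖z‖) ^ P.natDegree ≤ ‖P.eval z‖ := by
  have hsplit : P.Splits := IsAlgClosed.splits P
  have hcard : P.natDegree = Multiset.card P.roots := by simpa using hsplit.natDegree_eq_card_roots
  refine ⟨‖P.leadingCoeff‖ * (P.roots.map rc).prod, ?_, ?_⟩
  · apply mul_pos
    · exact norm_pos_iff.mpr (leadingCoeff_ne_zero.2 hP)
    · apply Multiset.prod_pos
      intro a ha
      obtain ⟨r, hr, rfl⟩ := Multiset.mem_map.1 ha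
      exact rc_pos (hroots r hr)
  · intro z hz
    have heq : P.eval z = P.leadingCoeff * ((P.roots.map (fun r => z - r)).prod) := by
      conv_lhs => rw [hsplit.eq_prod_roots]
      rw [eval_mul, eval_C, eval_multiset_prod, Multiset.map_map]
      simp [Function.comp_def]
    have habs : ‖P.eval z‖
        = ‖P.leadingCoeff‖ * ((P.roots.map (fun r => ‖z - r‖)).prod) := by
      rw [heq, norm_mul]
      congr 1
      rw [show ‖(Multiset.map (fun r => z - r) P.roots).prod‖
            = (normHom : ℂ →*₀ ℝ) (Multiset.map (fun r => z - r) P.roots).prod from rfl,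
          map_multiset_prod, Multiset.map_map]
      rfl
    rw [habs, hcard, mul_assoc]
    exact mul_le_mul_of_nonneg_left (prod_rc_le hroots hz) (norm_nonneg _)



lemma inf_key {r z : ℂ} (h : 3 + 2 * ‖r‖ ≤ ‖z‖) :
    (1 + ‖z‖) / 2 ≤ ‖z - r‖ := by
  have h2 : ‖z‖ - ‖r‖ ≤ ‖z - r‖ := by
    simpa using norm_sub_norm_le z r
  linarith

/-- E1∞ : lower bound near infinity for any nonzero polynomial. -/
lemma eval_lower_infty {P : Polynomial ℂ} (hP : P ≠ 0) :
    ∃ R c : ℝ, 0 < c ∧ ∀ z : ℂ, R ≤ ‖z‖ →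
      c * (1 + ‖z‖) ^ P.natDegree ≤ ‖P.eval z‖ := by
  have hsplit : P.Splits := IsAlgClosed.splits P
  have hcard : P.natDegree = Multiset.card P.roots := by
    simpa using hsplit.natDegree_eq_card_roots
  refine ⟨3 + 2 * (P.roots.map (fun r => ‖r‖)).sum,
    ‖P.leadingCoeff‖ / 2 ^ P.natDegree, ?_, ?_⟩
  · apply div_pos (norm_pos_iff.mpr (leadingCoeff_ne_zero.2 hP)) (by positivity)
  · intro z hz
    have heq : P.eval z = P.leadingCoeff * ((P.roots.map (fun r => z - r)).prod) := by
      conv_lhs => rw [hsplit.eq_prod_roots]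
      rw [eval_mul, eval_C, eval_multiset_prod, Multiset.map_map]
      simp [Function.comp_def]
    have habs : ‖P.eval z‖
        = ‖P.leadingCoeff‖ * ((P.roots.map (fun r => ‖z - r‖)).prod) := by
      rw [heq, norm_mul]
      congr 1
      rw [show ‖(Multiset.map (fun r => z - r) P.roots).prod‖
            = (normHom : ℂ →*₀ ℝ) (Multiset.map (fun r => z - r) P.roots).prod from rfl,
          map_multiset_prod, Multiset.map_map]
      rfl
    have hb : ∀ r ∈ P.roots, 3 + 2 * ‖r‖ ≤ ‖z‖ := by
      intro r hr
      have h1 : ‖r‖ ≤ (P.roots.map (fun r => ‖r‖)).sum :=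
        Multiset.single_le_sum (fun x hx => by
          obtain ⟨y, _, rfl⟩ := Multiset.mem_map.1 hx; exact norm_nonneg y) _
          (Multiset.mem_map_of_mem _ hr)
      linarith
    have key := Multiset.prod_map_le_prod_map₀ (s := P.roots)
        (fun _ => (1 + ‖z‖) / 2) (fun r => ‖z - r‖)
        (fun r _ => by positivity)
        (fun r hr => inf_key (hb r hr))
    have hl : ((1 + ‖z‖) / 2) ^ Multiset.card P.roots
        ≤ (P.roots.map (fun r => ‖z - r‖)).prod := by
      simpa [Multiset.map_const', Multiset.prod_replicate] using key
    rw [habs, hcard]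
    calc ‖P.leadingCoeff‖ / 2 ^ Multiset.card P.roots
          * (1 + ‖z‖) ^ Multiset.card P.roots
        = ‖P.leadingCoeff‖ * ((1 + ‖z‖) / 2) ^ Multiset.card P.roots := by
          rw [div_pow]; ring
      _ ≤ _ := mul_le_mul_of_nonneg_left hl (norm_nonneg _)

/-- E2 : upper bound for a polynomial of degree at most `m`. -/
lemma eval_upper (P : Polynomial ℂ) {m : ℕ} (hm : P.natDegree ≤ m) :
    ∃ C : ℝ, 0 < C ∧ ∀ z : ℂ, ‖P.eval z‖ ≤ C * (1 + ‖z‖) ^ m := by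
  refine ⟨(∑ i ∈ Finset.range (P.natDegree + 1), ‖P.coeff i‖) + 1, by positivity, ?_⟩
  intro z
  have h1 : (1:ℝ) ≤ 1 + ‖z‖ := by
    have := norm_nonneg z; linarith
  rw [Polynomial.eval_eq_sum_range]
  calc ‖∑ i ∈ Finset.range (P.natDegree + 1), P.coeff i * z ^ i‖
      ≤ ∑ i ∈ Finset.range (P.natDegree + 1), ‖P.coeff i * z ^ i‖ :=
        norm_sum_le _ _
    _ ≤ ∑ i ∈ Finset.range (P.natDegree + 1), ‖P.coeff i‖ * (1 + ‖z‖) ^ m := by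
        apply Finset.sum_le_sum
        intro i hi
        rw [norm_mul, norm_pow]
        apply mul_le_mul_of_nonneg_left ?_ (norm_nonneg _)
        calc ‖z‖ ^ i ≤ (1 + ‖z‖) ^ i := by
              apply pow_le_pow_left₀ (norm_nonneg _) (by linarith)
          _ ≤ (1 + ‖z‖) ^ m := by
              apply pow_le_pow_right₀ h1
              have := Finset.mem_range.1 hi
              omega
    _ = (∑ i ∈ Finset.range (P.natDegree + 1), ‖P.coeff i‖)
          * (1 + ‖z‖) ^ m := by rw [Finset.sum_mul]
    _ ≤ _ := by
        apply mul_le_mul_of_nonneg_right _ (by positivity)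
        linarith



/-- The product of a conjugation-closed multiset of complex numbers with nonzero real
parts is a nonzero real, positive iff the count of elements with negative real part is even. -/
lemma conj_prod_sign (T : Multiset ℂ) (hc : T.map (starRingEnd ℂ) = T)
    (h0 : ∀ x ∈ T, x.re ≠ 0) :
    ∃ t : ℝ, T.prod = (t : ℂ) ∧ t ≠ 0 ∧
      (0 < t ↔ Even (Multiset.card (T.filter (fun x => x.re < 0)))) := by
  classical
  induction T using Multiset.strongInductionOn with
  | _ T ih =>
  rcases Multiset.empty_or_exists_mem T with rfl | ⟨x, hxT⟩
  · exact ⟨1, by simp, one_ne_zero, by simp⟩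
  by_cases hx : (starRingEnd ℂ) x = x
  -- x is real
  · have hxre : (x.re : ℂ) = x := (Complex.conj_eq_iff_re).mp hx
    set T' := T.erase x with hT'
    have hTT : x ::ₘ T' = T := Multiset.cons_erase hxT
    have hlt : T' < T := Multiset.erase_lt.2 hxT
    have hc' : T'.map (starRingEnd ℂ) = T' := by
      rw [hT', Multiset.map_erase _ (starRingEnd ℂ).injective, hc, hx]
    have h0' : ∀ y ∈ T', y.re ≠ 0 := fun y hy => h0 y (Multiset.mem_of_le (Multiset.erase_le _ _) hy)
    obtain ⟨t', hp', ht'0, hiff'⟩ := ih T' hlt hc' h0'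
    refine ⟨x.re * t', ?_, ?_, ?_⟩
    · rw [← hTT, Multiset.prod_cons, hp']
      push_cast
      rw [hxre]
    · have : x.re ≠ 0 := h0 x hxT
      exact mul_ne_zero this ht'0
    · have hre : x.re ≠ 0 := h0 x hxT
      rw [← hTT]
      by_cases hneg : x.re < 0
      · rw [Multiset.filter_cons_of_pos (p := fun y : ℂ => y.re < 0) _ hneg, Multiset.card_cons, Nat.even_add_one, ← hiff']
        constructor
        · intro h hpos
          nlinarith
        · intro h
          rcases ht'0.lt_or_gt with h1 | h1
          · nlinarith
          · exact absurd h1 h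
      · have hpos : 0 < x.re := lt_of_le_of_ne (not_lt.1 hneg) (Ne.symm hre)
        rw [Multiset.filter_cons_of_neg (p := fun y : ℂ => y.re < 0) _ hneg, ← hiff']
        constructor
        · intro h; nlinarith
        · intro h; nlinarith
  -- x is not real : remove the pair x, conj x
  · have hcx : (starRingEnd ℂ) x ∈ T := by
      rw [← hc]; exact Multiset.mem_map_of_mem _ hxT
    have hcx' : (starRingEnd ℂ) x ∈ T.erase x := (Multiset.mem_erase_of_ne hx).2 hcx
    set T'' := (T.erase x).erase ((starRingEnd ℂ) x) with hT''
    have hTT : x ::ₘ (starRingEnd ℂ) x ::ₘ T'' = T := by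
      rw [hT'', Multiset.cons_erase hcx', Multiset.cons_erase hxT]
    have hlt : T'' < T :=
      lt_of_le_of_lt (Multiset.erase_le _ _) (Multiset.erase_lt.2 hxT)
    have hc'' : T''.map (starRingEnd ℂ) = T'' := by
      rw [hT'', Multiset.map_erase _ (starRingEnd ℂ).injective,
        Multiset.map_erase _ (starRingEnd ℂ).injective, hc, Complex.conj_conj,
        Multiset.erase_comm]
    have h0'' : ∀ y ∈ T'', y.re ≠ 0 := fun y hy => h0 y
      (Multiset.mem_of_le (le_trans (Multiset.erase_le _ _) (Multiset.erase_le _ _)) hy)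
    obtain ⟨t'', hp'', ht''0, hiff''⟩ := ih T'' hlt hc'' h0''
    have hx0 : x ≠ 0 := fun h => h0 x hxT (by rw [h]; simp)
    have hnsq : 0 < Complex.normSq x := Complex.normSq_pos.2 hx0
    refine ⟨Complex.normSq x * t'', ?_, ?_, ?_⟩
    · rw [← hTT, Multiset.prod_cons, Multiset.prod_cons, hp'', ← mul_assoc,
        Complex.mul_conj]
      push_cast; ring
    · exact mul_ne_zero (ne_of_gt hnsq) ht''0
    · have hcre : ((starRingEnd ℂ) x).re = x.re := Complex.conj_re x
      rw [← hTT]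
      by_cases hneg : x.re < 0
      · rw [Multiset.filter_cons_of_pos (p := fun y : ℂ => y.re < 0) _ hneg, Multiset.filter_cons_of_pos (p := fun y : ℂ => y.re < 0) _ (by show ((starRingEnd ℂ) x).re < 0; rw [hcre]; exact hneg)]
        simp only [Multiset.card_cons]
        rw [Nat.even_add_one, Nat.even_add_one, not_not, ← hiff'']
        constructor
        · intro h; nlinarith
        · intro h; nlinarith
      · rw [Multiset.filter_cons_of_neg (p := fun y : ℂ => y.re < 0) _ hneg, Multiset.filter_cons_of_neg (p := fun y : ℂ => y.re < 0) _ (by show ¬((starRingEnd ℂ) x).re < 0; rw [hcre]; exact hneg), ← hiff'']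
        constructor
        · intro h; nlinarith
        · intro h; nlinarith

/-- Sign of `p(0)` versus the leading coefficient , for a real polynomial with no
imaginary-axis roots and an even number of open-right-half-plane roots. -/
lemma eval_zero_sign {p : Polynomial ℝ} (hp : p ≠ 0)
    (h0 : ∀ z ∈ (p.map (algebraMap ℝ ℂ)).roots, z.re ≠ 0)
    (he : Even (Multiset.card (((p.map (algebraMap ℝ ℂ)).roots).filter (fun z => 0 < z.re)))) :
    ∃ t : ℝ, 0 < t ∧ p.eval 0 = t * p.leadingCoeff := by
  classical
  set P := p.map (algebraMap ℝ ℂ) with hPdef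
  have hP : P ≠ 0 := by
    rw [hPdef, Polynomial.map_ne_zero_iff (algebraMap ℝ ℂ).injective]; exact hp
  have hsplit : P.Splits := IsAlgClosed.splits P
  -- coefficients of `P` are real, hence `P` is conj-invariant
  have hconjP : P.map (starRingEnd ℂ) = P := by
    ext n
    simp [hPdef, Polynomial.coeff_map, Complex.conj_ofReal]
  have hconjroots : P.roots.map (starRingEnd ℂ) = P.roots := by
    have := hsplit.roots_map (starRingEnd ℂ)
    rw [hconjP] at this
    exact this.symm
  set T : Multiset ℂ := P.roots.map (fun r => -r) with hTdef
  have hcT : T.map (starRingEnd ℂ) = T := by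
    rw [hTdef, Multiset.map_map]
    have : ((starRingEnd ℂ) ∘ fun r => -r) = (fun r : ℂ => -r) ∘ (starRingEnd ℂ) := by
      funext y; simp
    rw [this, ← Multiset.map_map, hconjroots]
  have h0T : ∀ x ∈ T, x.re ≠ 0 := by
    intro x hx
    obtain ⟨r, hr, rfl⟩ := Multiset.mem_map.1 hx
    have := h0 r hr
    simp only [Complex.neg_re]
    intro h
    exact this (by linarith)
  have hcardeq : Multiset.card (T.filter (fun x => x.re < 0))
      = Multiset.card (P.roots.filter (fun z => 0 < z.re)) := by
    rw [hTdef, Multiset.filter_map]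
    rw [Multiset.card_map]
    congr 1
    apply Multiset.filter_congr
    intro r _
    simp [Function.comp]
  obtain ⟨t, hprod, ht0, hiff⟩ := conj_prod_sign T hcT h0T
  have ht : 0 < t := hiff.2 (by rw [hcardeq]; exact he)
  refine ⟨t, ht, ?_⟩
  -- evaluate P at 0
  have heq : P.eval 0 = P.leadingCoeff * T.prod := by
    conv_lhs => rw [hsplit.eq_prod_roots]
    rw [eval_mul, eval_C, eval_multiset_prod, Multiset.map_map, hTdef]
    congr 1
    congr 1
    apply Multiset.map_congr rfl
    intro r _
    simp
  have h1 : P.eval 0 = ((p.eval 0 : ℝ) : ℂ) := by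
    rw [hPdef, eval_map, eval₂_at_zero, coeff_zero_eq_eval_zero]
    rfl
  have h2 : P.leadingCoeff = ((p.leadingCoeff : ℝ) : ℂ) := by
    rw [hPdef, leadingCoeff_map_of_injective (algebraMap ℝ ℂ).injective]
    rfl
  rw [h1, h2, hprod] at heq
  have : ((p.eval 0 : ℝ) : ℂ) = (((t * p.leadingCoeff : ℝ)) : ℂ) := by
    rw [heq]; push_cast; ring
  exact_mod_cast this

/-- bound on the closed unit ball -/
lemma eval_ball (P : Polynomial ℂ) :
    ∃ H : ℝ, 0 < H ∧ ∀ z : ℂ, ‖z‖ ≤ 1 → ‖P.eval z‖ ≤ H := by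
  obtain ⟨C, hC, hb⟩ := eval_upper P (le_refl P.natDegree)
  refine ⟨C * 2 ^ P.natDegree, by positivity, fun z hz => ?_⟩
  calc ‖P.eval z‖ ≤ C * (1 + ‖z‖) ^ P.natDegree := hb z
    _ ≤ C * 2 ^ P.natDegree := by
        apply mul_le_mul_of_nonneg_left _ hC.le
        apply pow_le_pow_left₀ (by positivity) (by linarith)

lemma eval_ofReal_zero (p : Polynomial ℝ) :
    (p.map (algebraMap ℝ ℂ)).eval 0 = ((p.eval 0 : ℝ) : ℂ) := by
  rw [eval_map, eval₂_at_zero, coeff_zero_eq_eval_zero]; rfl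


end Stmt15Aux


open Stmt15Aux in
set_option maxHeartbeats 1000000 in
/-- static-gain adjustment by a high-pass filter `f(s) = (s+ξγ)/(s+ξ)`:
for sufficiently small `ξ > 0`, all roots of `(s+ξ)d_ℓ(s) − (s+ξγ)n_ℓ(s)` are in
the OLHP. -/
theorem stmt15 (γ : ℝ) (nl dl : Polynomial ℝ) (hdl : dl ≠ 0) (hcop : IsCoprime nl dl)
    (hsp : nl.degree < dl.degree)
    (heven : Even (orhpCount dl))
    (hnoimag : ∀ ω : ℝ, (dl.map (algebraMap ℝ ℂ)).eval ((ω : ℂ) * Complex.I) ≠ 0)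
    (hcl : ∀ z : ℂ, ((dl - nl).map (algebraMap ℝ ℂ)).eval z = 0 → z.re < 0)
    (hγ : |γ| < 1)
    (hsg : (⨆ ω : ℝ, ‖(γ : ℂ) * ratEval nl dl ((ω : ℂ) * Complex.I)‖) < 1) :
    ∃ ξ₀ : ℝ, 0 < ξ₀ ∧ ∀ ξ : ℝ, 0 < ξ → ξ < ξ₀ →
      ∀ z : ℂ, (((Polynomial.X + Polynomial.C ξ) * dl -
          (Polynomial.X + Polynomial.C (ξ * γ)) * nl).map (algebraMap ℝ ℂ)).eval z = 0 →
        z.re < 0 := by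
  have heven := heven
  unfold orhpCount at heven
  classical
  set Dc := dl.map (algebraMap ℝ ℂ) with hDcdef
  set Nc := nl.map (algebraMap ℝ ℂ) with hNcdef
  have hDc0 : Dc ≠ 0 := by
    rw [hDcdef, Polynomial.map_ne_zero_iff (algebraMap ℝ ℂ).injective]; exact hdl
  -- the closed-loop polynomial q = dl - nl
  set q : Polynomial ℝ := dl - nl with hqdef
  have hqdeg : q.degree = dl.degree := degree_sub_eq_left_of_degree_lt hsp
  have hq0 : q ≠ 0 := by
    intro h
    rw [h, degree_zero] at hqdeg
    exact hdl (degree_eq_bot.1 hqdeg.symm)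
  set Qc := q.map (algebraMap ℝ ℂ) with hQcdef
  have hQc0 : Qc ≠ 0 := by
    rw [hQcdef, Polynomial.map_ne_zero_iff (algebraMap ℝ ℂ).injective]; exact hq0
  have hQroots : ∀ r ∈ Qc.roots, r.re < 0 := by
    intro r hr
    exact hcl r (mem_roots'.1 hr).2
  obtain ⟨c, hc, hlow⟩ := eval_lower_rhp hQc0 hQroots
  -- the perturbation polynomial rp = dl - γ nl
  set rp : Polynomial ℝ := dl - C γ * nl with hrpdef
  set Rc := rp.map (algebraMap ℝ ℂ) with hRcdef
  have hrpdeg : Rc.natDegree ≤ Qc.natDegree := by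
    rw [hRcdef, hQcdef, natDegree_map_eq_of_injective (algebraMap ℝ ℂ).injective,
      natDegree_map_eq_of_injective (algebraMap ℝ ℂ).injective]
    apply natDegree_le_natDegree
    rw [hqdeg]
    apply le_trans (degree_sub_le _ _)
    simp only [sup_le_iff, le_refl, true_and]
    rw [Polynomial.C_mul']
    exact le_trans (degree_smul_le _ _) hsp.le
  obtain ⟨C1, hC1, hupp⟩ := eval_upper Rc hrpdeg
  -- bounds on the divX parts
  obtain ⟨H, hH, hHb⟩ := eval_ball Qc.divX
  obtain ⟨K2, hK2, hK2b⟩ := eval_ball Rc.divX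
  -- sign analysis at 0
  have hnoim : ∀ z ∈ Dc.roots, z.re ≠ 0 := by
    intro z hz h0
    have hzim : z = (z.im : ℂ) * Complex.I := by
      apply Complex.ext <;> simp [h0]
    apply hnoimag z.im
    rw [← hzim]
    exact (mem_roots'.1 hz).2
  obtain ⟨t1, ht1, hd0⟩ := eval_zero_sign hdl hnoim heven
  have hqnoim : ∀ z ∈ Qc.roots, z.re ≠ 0 := fun z hz => ne_of_lt (hQroots z hz)
  have hqeven : Even (Multiset.card ((Qc.roots).filter (fun z => 0 < z.re))) := by
    have : (Qc.roots).filter (fun z => 0 < z.re) = 0 :=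
      Multiset.filter_eq_nil.2 (fun z hz => not_lt.2 (hQroots z hz).le)
    rw [this]; simp
  obtain ⟨t2, ht2, ha0⟩ := eval_zero_sign hq0 hqnoim hqeven
  have hlc : q.leadingCoeff = dl.leadingCoeff := leadingCoeff_sub_of_degree_lt hsp
  have hL0 : dl.leadingCoeff ≠ 0 := leadingCoeff_ne_zero.2 hdl
  -- smallness of the static gain at ω = 0, via boundedness of the H∞ family
  have hd00 : dl.eval 0 ≠ 0 := by
    intro h
    apply hnoimag 0
    have : ((0 : ℝ) : ℂ) * Complex.I = 0 := by push_cast; ring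
    rw [this, eval_ofReal_zero, h]
    simp
  have hBdd : BddAbove (Set.range
      (fun ω : ℝ => ‖(γ : ℂ) * ratEval nl dl ((ω : ℂ) * Complex.I)‖)) := by
    obtain ⟨R0, c2, hc2, hinf⟩ := eval_lower_infty hDc0
    have hNdeg : Nc.natDegree ≤ Dc.natDegree := by
      rw [hNcdef, hDcdef, natDegree_map_eq_of_injective (algebraMap ℝ ℂ).injective,
        natDegree_map_eq_of_injective (algebraMap ℝ ℂ).injective]
      exact natDegree_le_natDegree hsp.le
    obtain ⟨C3, hC3, hNb⟩ := eval_upper Nc hNdeg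
    have hcont : Continuous (fun ω : ℝ => ‖(γ : ℂ) * ratEval nl dl ((ω : ℂ) * Complex.I)‖) := by
      apply continuous_norm.comp
      apply continuous_const.mul
      unfold ratEval
      have hco : Continuous (fun ω : ℝ => (ω : ℂ) * Complex.I) :=
        Complex.continuous_ofReal.mul continuous_const
      exact ((Nc.continuous_aeval.comp hco).div (Dc.continuous_aeval.comp hco)
        (fun ω => hnoimag ω))
    set KK := Set.Icc (-(|R0| + 1)) (|R0| + 1) with hKK
    have hcomp : IsCompact KK := isCompact_Icc
    obtain ⟨M2, hM2⟩ := (hcomp.bddAbove_image hcont.continuousOn)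
    rw [mem_upperBounds] at hM2
    refine ⟨max (|γ| * C3 / c2) M2, ?_⟩
    rintro y ⟨ω, rfl⟩
    rcases le_or_gt |ω| (|R0| + 1) with hω | hω
    · refine le_max_of_le_right (hM2 _ ?_)
      exact Set.mem_image_of_mem _ (abs_le.1 hω)
    · apply le_max_of_le_left
      have habsiw : ‖(ω : ℂ) * Complex.I‖ = |ω| := by
        rw [norm_mul, Complex.norm_I, Complex.norm_real, Real.norm_eq_abs, mul_one]
      have hωR : R0 ≤ ‖(ω : ℂ) * Complex.I‖ := by
        rw [habsiw]
        calc R0 ≤ |R0| := le_abs_self _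
          _ ≤ |ω| := by linarith
      have hlowD := hinf _ hωR
      have huppN := hNb ((ω : ℂ) * Complex.I)
      have hXpos : (0:ℝ) < (1 + ‖(ω : ℂ) * Complex.I‖) ^ Dc.natDegree := by
        positivity
      have hDpos : (0:ℝ) < ‖Dc.eval ((ω : ℂ) * Complex.I)‖ := by
        exact norm_pos_iff.mpr (hnoimag ω)
      have hc2X : (0:ℝ) < c2 * (1 + ‖(ω : ℂ) * Complex.I‖) ^ Dc.natDegree := by
        positivity
      have h1 : ‖Nc.eval ((ω : ℂ) * Complex.I)‖
          / ‖Dc.eval ((ω : ℂ) * Complex.I)‖ ≤ C3 / c2 := by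
        rw [div_le_div_iff₀ hDpos hc2]
        nlinarith [norm_nonneg (Nc.eval ((ω : ℂ) * Complex.I))]
      show ‖(γ : ℂ) * ratEval nl dl ((ω : ℂ) * Complex.I)‖ ≤ |γ| * C3 / c2
      unfold ratEval
      rw [norm_mul, norm_div, Complex.norm_real, Real.norm_eq_abs, mul_div_assoc]
      exact mul_le_mul_of_nonneg_left h1 (abs_nonneg γ)
  have hF0 : ‖(γ : ℂ) * ratEval nl dl (((0:ℝ) : ℂ) * Complex.I)‖ < 1 :=
    lt_of_le_of_lt (le_ciSup hBdd 0) hsg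
  have hB : |γ * nl.eval 0| < |dl.eval 0| := by
    have h00 : (((0:ℝ) : ℂ) * Complex.I) = 0 := by push_cast; ring
    rw [h00] at hF0
    unfold ratEval at hF0
    rw [eval_ofReal_zero, eval_ofReal_zero] at hF0
    rw [norm_mul, norm_div, Complex.norm_real, Real.norm_eq_abs, Complex.norm_real, Real.norm_eq_abs, Complex.norm_real, Real.norm_eq_abs] at hF0
    rw [mul_div_assoc'] at hF0
    rw [div_lt_one (abs_pos.2 hd00)] at hF0
    rw [abs_mul]
    exact hF0
  -- the two constants a and b, with a*b > 0
  set a : ℝ := q.eval 0 with hadef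
  set b : ℝ := dl.eval 0 - γ * nl.eval 0 with hbdef
  have hbd : 0 < b * dl.eval 0 := by
    have h1 : γ * nl.eval 0 * dl.eval 0 ≤ |γ * nl.eval 0| * |dl.eval 0| := by
      calc γ * nl.eval 0 * dl.eval 0 ≤ |γ * nl.eval 0 * dl.eval 0| := le_abs_self _
        _ = |γ * nl.eval 0| * |dl.eval 0| := abs_mul _ _
    have h2 : |dl.eval 0| * |dl.eval 0| = dl.eval 0 * dl.eval 0 := by
      rw [← abs_mul, abs_mul_self]
    have h3 : (0:ℝ) < |dl.eval 0| := abs_pos.2 hd00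
    rw [hbdef]
    nlinarith
  have hab : 0 < a * b := by
    rw [ha0, hlc]
    rw [hd0] at hbd
    nlinarith
  have hb0 : b ≠ 0 := by
    intro h; rw [h, mul_zero] at hab; exact lt_irrefl 0 hab
  have habspos : (0:ℝ) < |b| := abs_pos.2 hb0
  -- the constants of the final estimate
  set m := Qc.natDegree with hmdef
  set K := C1 / c with hKdef
  have hK : 0 < K := div_pos hC1 hc
  set D2 := K * (K * H + K2) with hD2def
  have hD2 : 0 < D2 := mul_pos hK (add_pos (mul_pos hK hH) hK2)
  refine ⟨min (1 / (K + 1)) (|b| / (D2 + 1)), lt_min (by positivity)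
    (div_pos habspos (by positivity)), ?_⟩
  intro ξ hξ hξ0 z hz
  by_contra hre
  push_neg at hre
  have hξa : ξ < 1 / (K + 1) := lt_of_lt_of_le hξ0 (min_le_left _ _)
  have hξb : ξ < |b| / (D2 + 1) := lt_of_lt_of_le hξ0 (min_le_right _ _)
  -- the root equation
  have hz' : (z + (ξ:ℂ)) * Dc.eval z - (z + ((ξ * γ : ℝ):ℂ)) * Nc.eval z = 0 := by
    rw [Polynomial.map_sub, Polynomial.map_mul, Polynomial.map_mul, Polynomial.map_add,
      Polynomial.map_add, Polynomial.map_X, Polynomial.map_C, Polynomial.map_C] at hz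
    rw [eval_sub, eval_mul, eval_mul, eval_add, eval_add, eval_X, eval_C, eval_C] at hz
    exact hz
  have hQeval : Qc.eval z = Dc.eval z - Nc.eval z := by
    rw [hQcdef, hqdef, Polynomial.map_sub, eval_sub]
  have hReval : Rc.eval z = Dc.eval z - (γ:ℂ) * Nc.eval z := by
    rw [hRcdef, hrpdef, Polynomial.map_sub, Polynomial.map_mul, Polynomial.map_C,
      eval_sub, eval_mul, eval_C]
    rfl
  have hroot : z * Qc.eval z + (ξ:ℂ) * Rc.eval z = 0 := by
    rw [hQeval, hReval]
    push_cast at hz' ⊢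
    linear_combination hz'
  -- the modulus bound |z| ≤ ξ K
  have habs1 : ‖z‖ * ‖Qc.eval z‖ = ξ * ‖Rc.eval z‖ := by
    have hneg : z * Qc.eval z = -((ξ:ℂ) * Rc.eval z) := by linear_combination hroot
    calc ‖z‖ * ‖Qc.eval z‖ = ‖z * Qc.eval z‖ :=
          (norm_mul _ _).symm
      _ = ‖-((ξ:ℂ) * Rc.eval z)‖ := by rw [hneg]
      _ = ξ * ‖Rc.eval z‖ := by
          rw [norm_neg, norm_mul, Complex.norm_real, Real.norm_eq_abs, abs_of_pos hξ]
  have hXp : (0:ℝ) < (1 + ‖z‖) ^ m := by positivity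
  have hzb : ‖z‖ ≤ ξ * K := by
    have h1 := hlow z hre
    have h2 := hupp z
    have h3 : (‖z‖ * c) * (1 + ‖z‖) ^ m
        ≤ (ξ * C1) * (1 + ‖z‖) ^ m := by
      calc (‖z‖ * c) * (1 + ‖z‖) ^ m
          = ‖z‖ * (c * (1 + ‖z‖) ^ m) := by ring
        _ ≤ ‖z‖ * ‖Qc.eval z‖ :=
            mul_le_mul_of_nonneg_left h1 (norm_nonneg z)
        _ = ξ * ‖Rc.eval z‖ := habs1
        _ ≤ ξ * (C1 * (1 + ‖z‖) ^ m) := mul_le_mul_of_nonneg_left h2 hξ.le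
        _ = (ξ * C1) * (1 + ‖z‖) ^ m := by ring
    have h4 : ‖z‖ * c ≤ ξ * C1 := le_of_mul_le_mul_right h3 hXp
    rw [hKdef]
    rw [mul_div_assoc']
    rw [le_div_iff₀ hc]
    exact h4
  have hz1 : ‖z‖ ≤ 1 := by
    have h5 : ξ * (K + 1) ≤ 1 := by
      rw [← le_div_iff₀ (by positivity : (0:ℝ) < K + 1)]
      exact hξa.le
    nlinarith [norm_nonneg z, hξ.le, hK.le]
  -- divX decompositions
  have hQd : Qc.eval z = z * Qc.divX.eval z + (a:ℂ) := by
    conv_lhs => rw [← Polynomial.X_mul_divX_add Qc]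
    rw [eval_add, eval_mul, eval_X, eval_C]
    congr 1
    rw [hQcdef, coeff_map, coeff_zero_eq_eval_zero, hadef]
    rfl
  have hRd : Rc.eval z = z * Rc.divX.eval z + (b:ℂ) := by
    conv_lhs => rw [← Polynomial.X_mul_divX_add Rc]
    rw [eval_add, eval_mul, eval_X, eval_C]
    congr 1
    rw [hRcdef, coeff_map, coeff_zero_eq_eval_zero, hrpdef, eval_sub, eval_mul, eval_C, hbdef]
    rfl
  have weq : (a:ℂ) * z + (b:ℂ) * (ξ:ℂ)
      = -(z ^ 2 * Qc.divX.eval z + (ξ:ℂ) * z * Rc.divX.eval z) := by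
    rw [hQd, hRd] at hroot
    linear_combination hroot
  -- upper bound on w
  have habsw : ‖(a:ℂ) * z + (b:ℂ) * (ξ:ℂ)‖ ≤ ξ ^ 2 * D2 := by
    rw [weq, norm_neg]
    have hHz := hHb z hz1
    have hKz := hK2b z hz1
    calc ‖z ^ 2 * Qc.divX.eval z + (ξ:ℂ) * z * Rc.divX.eval z‖
        ≤ ‖z ^ 2 * Qc.divX.eval z‖ + ‖(ξ:ℂ) * z * Rc.divX.eval z‖ :=
          norm_add_le _ _
      _ = ‖z‖ ^ 2 * ‖Qc.divX.eval z‖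
            + ξ * (‖z‖ * ‖Rc.divX.eval z‖) := by
          rw [norm_mul, norm_mul, norm_mul, norm_pow, Complex.norm_real, Real.norm_eq_abs, abs_of_pos hξ]
          ring
      _ ≤ (ξ * K) ^ 2 * H + ξ * ((ξ * K) * K2) := by
          have h6 : ‖z‖ ^ 2 * ‖Qc.divX.eval z‖ ≤ (ξ * K) ^ 2 * H := by
            have hx2 : ‖z‖ ^ 2 ≤ (ξ * K) ^ 2 := by
              nlinarith [norm_nonneg z]
            exact mul_le_mul hx2 hHz (norm_nonneg _) (by positivity)
          have h7 : ‖z‖ * ‖Rc.divX.eval z‖ ≤ (ξ * K) * K2 := by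
            exact mul_le_mul hzb hKz (norm_nonneg _) (by positivity)
          have := mul_le_mul_of_nonneg_left h7 hξ.le
          linarith
      _ = ξ ^ 2 * D2 := by rw [hD2def]; ring
  -- lower bound on w
  have hwre : ((a:ℂ) * z + (b:ℂ) * (ξ:ℂ)).re = a * z.re + b * ξ := by
    simp [Complex.add_re, Complex.mul_re, Complex.ofReal_re, Complex.ofReal_im]
  have hwlow : |b| * ξ ≤ ‖(a:ℂ) * z + (b:ℂ) * (ξ:ℂ)‖ := by
    have h8 : |a * z.re + b * ξ| ≤ ‖(a:ℂ) * z + (b:ℂ) * (ξ:ℂ)‖ := by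
      rw [← hwre]; exact Complex.abs_re_le_norm _
    have ha0' : a ≠ 0 := by intro h; rw [h, zero_mul] at hab; exact lt_irrefl 0 hab
    rcases ha0'.lt_or_gt with haneg | hapos
    · have hbneg : b < 0 := by nlinarith
      have h9 : a * z.re + b * ξ ≤ b * ξ := by nlinarith
      have h10 : |b| * ξ = -(b * ξ) := by rw [abs_of_neg hbneg]; ring
      calc |b| * ξ = -(b * ξ) := h10
        _ ≤ -(a * z.re + b * ξ) := by linarith
        _ ≤ |a * z.re + b * ξ| := neg_le_abs _
        _ ≤ _ := h8
    · have hbpos : 0 < b := by nlinarith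
      calc |b| * ξ = b * ξ := by rw [abs_of_pos hbpos]
        _ ≤ a * z.re + b * ξ := by nlinarith
        _ ≤ |a * z.re + b * ξ| := le_abs_self _
        _ ≤ _ := h8
  -- conclusion
  have hfin : |b| ≤ ξ * D2 := by
    have h11 : |b| * ξ ≤ (ξ * D2) * ξ := by
      calc |b| * ξ ≤ ξ ^ 2 * D2 := le_trans hwlow habsw
        _ = (ξ * D2) * ξ := by ring
    exact le_of_mul_le_mul_right h11 hξ
  have h12 : ξ * (D2 + 1) < |b| := by
    rw [← lt_div_iff₀ (by positivity : (0:ℝ) < D2 + 1)]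
    exact hξb
  nlinarith
end

section
/- Let γ ∈ ℝ and let ℓ(s) = n_ℓ(s)/d_ℓ(s) (coprime real polynomials) be a strictly proper real rational function with an even number (counted with multiplicity) of poles with positive real part and no poles on the imaginary axis. If |γ| < 1 and sup_{ω∈ℝ} |γ ℓ(iω)| < 1, then the polynomial d_ℓ(s) − γ n_ℓ(s) has no roots on the imaginary axis and an even number (counted with multiplicity) of roots with positive real part. -/
open Polynomial

section AuxStmt16
open Complex ComplexConjugate

lemma mapCeval (p : Polynomial ℝ) (x : ℝ) :
    (p.map (algebraMap ℝ ℂ)).eval ((x : ℝ) : ℂ) = ((p.eval x : ℝ) : ℂ) := by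
  rw [Polynomial.eval_map, show ((x:ℝ):ℂ) = algebraMap ℝ ℂ x from rfl,
    Polynomial.eval₂_at_apply]
  rfl

lemma orhpCount_mul (p q : Polynomial ℝ) (hp : p ≠ 0) (hq : q ≠ 0) :
    orhpCount (p * q) = orhpCount p + orhpCount q := by
  unfold orhpCount
  rw [Polynomial.map_mul, Polynomial.roots_mul, Multiset.filter_add, Multiset.card_add]
  exact mul_ne_zero ((Polynomial.map_ne_zero_iff (algebraMap ℝ ℂ).injective).2 hp)
    ((Polynomial.map_ne_zero_iff (algebraMap ℝ ℂ).injective).2 hq)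

lemma orhpCount_X_sub_C (x : ℝ) :
    orhpCount (X - C x) = if 0 < x then 1 else 0 := by
  unfold orhpCount
  rw [Polynomial.map_sub, Polynomial.map_X, Polynomial.map_C, Polynomial.roots_X_sub_C,
    Multiset.filter_singleton]
  have hre : ((algebraMap ℝ ℂ) x).re = x := rfl
  by_cases h : 0 < x <;> simp [hre, h]

lemma orhpCount_quad (r : ℂ) (him : r.im ≠ 0) :
    orhpCount (X ^ 2 - C (2 * r.re) * X + C (‖r‖ ^ 2)) = if 0 < r.re then 2 else 0 := by
  have hmap : (X ^ 2 - C (2 * r.re) * X + C (‖r‖ ^ 2) : Polynomial ℝ).map (algebraMap ℝ ℂ)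
      = (X - C (conj r)) * (X - C r) := by
    calc
      map (algebraMap ℝ ℂ) (X ^ 2 - C (2 * r.re) * X + C (‖r‖ ^ 2))
      _ = X ^ 2 - C (↑(2 * r.re) : ℂ) * X + C (‖r‖ ^ 2 : ℂ) := by simp
      _ = (X - C (conj r)) * (X - C r) := by
        rw [← add_conj, map_add, ← mul_conj', map_mul]
        ring
  unfold orhpCount
  rw [hmap, Polynomial.roots_mul (mul_ne_zero (Polynomial.X_sub_C_ne_zero _)
      (Polynomial.X_sub_C_ne_zero _)),
    Polynomial.roots_X_sub_C, Polynomial.roots_X_sub_C, Multiset.filter_add,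
    Multiset.card_add, Multiset.filter_singleton, Multiset.filter_singleton]
  have hc : (conj r).re = r.re := by simp
  by_cases h : 0 < r.re <;> simp [hc, h]

lemma even_orhp_iff : ∀ n : ℕ, ∀ p : Polynomial ℝ, p.natDegree = n → p ≠ 0 →
    (∀ z : ℂ, (p.map (algebraMap ℝ ℂ)).eval z = 0 → z.re ≠ 0) →
    (Even (orhpCount p) ↔ 0 < p.eval 0 * p.leadingCoeff) := by
  intro n
  induction n using Nat.strong_induction_on with
  | _ n ih =>
  intro p hn hp h
  rcases Nat.eq_zero_or_pos n with h0 | hpos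
  · subst h0
    obtain ⟨a, rfl⟩ := Polynomial.natDegree_eq_zero.1 hn
    have ha : a ≠ 0 := fun h' => hp (by simp [h'])
    have hc : orhpCount (C a) = 0 := by
      unfold orhpCount; rw [Polynomial.map_C, Polynomial.roots_C]; simp
    rw [hc]
    simp [mul_self_pos, ha]
  · have hmapne : p.map (algebraMap ℝ ℂ) ≠ 0 :=
      (Polynomial.map_ne_zero_iff (algebraMap ℝ ℂ).injective).2 hp
    have hdegmap : 0 < (p.map (algebraMap ℝ ℂ)).degree := by
      rw [Polynomial.degree_map]
      exact Polynomial.natDegree_pos_iff_degree_pos.1 (hn ▸ hpos)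
    obtain ⟨r, hr⟩ := Complex.exists_root hdegmap
    have hrz : (p.map (algebraMap ℝ ℂ)).eval r = 0 := hr
    have hre : r.re ≠ 0 := h r hrz
    have h00 : p.eval 0 ≠ 0 := by
      intro h'
      refine h 0 ?_ rfl
      have := mapCeval p 0
      simpa [h'] using this
    by_cases him : r.im = 0
    · -- real root
      have hrx : r = ((r.re : ℝ) : ℂ) := by
        apply Complex.ext <;> simp [him]
      set x := r.re with hxdef
      have hxroot : p.eval x = 0 := by
        have h1 := mapCeval p x
        rw [← hrx, hrz] at h1
        exact_mod_cast h1.symm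
      obtain ⟨q, hq⟩ := Polynomial.dvd_iff_isRoot.2 hxroot
      have hq0 : q ≠ 0 := fun h' => hp (by rw [hq, h', mul_zero])
      have hqdeg : q.natDegree = n - 1 := by
        have h2 := congrArg Polynomial.natDegree hq
        rw [hn, Polynomial.natDegree_mul (Polynomial.X_sub_C_ne_zero x) hq0,
          Polynomial.natDegree_X_sub_C] at h2
        omega
      have hhq : ∀ z : ℂ, (q.map (algebraMap ℝ ℂ)).eval z = 0 → z.re ≠ 0 := by
        intro z hz
        apply h z
        rw [hq, Polynomial.map_mul, Polynomial.eval_mul, hz, mul_zero]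
      have ihq := ih (n-1) (by omega) q hqdeg hq0 hhq
      have hcount : orhpCount p = (if 0 < x then 1 else 0) + orhpCount q := by
        rw [hq, orhpCount_mul _ _ (Polynomial.X_sub_C_ne_zero x) hq0, orhpCount_X_sub_C]
      have heval : p.eval 0 = -x * q.eval 0 := by
        rw [hq]; simp
      have hlead : p.leadingCoeff = q.leadingCoeff := by
        rw [hq, Polynomial.leadingCoeff_mul, (Polynomial.monic_X_sub_C x).leadingCoeff, one_mul]
      have hq00 : q.eval 0 ≠ 0 := by
        intro h'; apply h00; rw [heval, h', mul_zero]
      have hqlne : q.leadingCoeff ≠ 0 := Polynomial.leadingCoeff_ne_zero.2 hq0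
      rw [hcount, heval, hlead]
      by_cases hx0 : 0 < x
      · rw [if_pos hx0, add_comm, Nat.even_add_one, ihq]
        constructor
        · intro h1
          have h2 : q.eval 0 * q.leadingCoeff < 0 :=
            lt_of_le_of_ne (not_lt.1 h1) (mul_ne_zero hq00 hqlne)
          nlinarith [mul_pos_of_neg_of_neg (show -x < 0 by linarith) h2]
        · intro h1 h2
          nlinarith [mul_pos hx0 h2]
      · have hxneg : x < 0 := lt_of_le_of_ne (not_lt.1 hx0) hre
        rw [if_neg hx0, zero_add, ihq]
        constructor
        · intro h1
          nlinarith [mul_pos (neg_pos.2 hxneg) h1]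
        · intro h1
          by_contra h2
          have h3 : q.eval 0 * q.leadingCoeff < 0 :=
            lt_of_le_of_ne (not_lt.1 h2) (mul_ne_zero hq00 hqlne)
          nlinarith [mul_neg_of_pos_of_neg (neg_pos.2 hxneg) h3]
    · -- nonreal root
      have haeval : Polynomial.aeval r p = 0 := by
        rw [Polynomial.aeval_def, ← Polynomial.eval_map]; exact hrz
      obtain ⟨q, hq⟩ := p.quadratic_dvd_of_aeval_eq_zero_im_ne_zero haeval him
      set Q : Polynomial ℝ := X ^ 2 - C (2 * r.re) * X + C (‖r‖ ^ 2) with hQdef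
      have hq0 : q ≠ 0 := fun h' => hp (by rw [hq, h', mul_zero])
      have hQmap : Q.map (algebraMap ℝ ℂ) = (X - C (conj r)) * (X - C r) := by
        calc
          map (algebraMap ℝ ℂ) (X ^ 2 - C (2 * r.re) * X + C (‖r‖ ^ 2))
          _ = X ^ 2 - C (↑(2 * r.re) : ℂ) * X + C (‖r‖ ^ 2 : ℂ) := by simp
          _ = (X - C (conj r)) * (X - C r) := by
            rw [← add_conj, map_add, ← mul_conj', map_mul]
            ring
      have hQne : Q ≠ 0 := by
        intro h'
        have h2 := hQmap
        rw [h', Polynomial.map_zero] at h2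
        exact mul_ne_zero (Polynomial.X_sub_C_ne_zero _) (Polynomial.X_sub_C_ne_zero _) h2.symm
      have hQnd : Q.natDegree = 2 := by
        have h1 : (Q.map (algebraMap ℝ ℂ)).natDegree = 2 := by
          rw [hQmap, Polynomial.natDegree_mul (Polynomial.X_sub_C_ne_zero _)
            (Polynomial.X_sub_C_ne_zero _), Polynomial.natDegree_X_sub_C,
            Polynomial.natDegree_X_sub_C]
        rwa [Polynomial.natDegree_map] at h1
      have hQlead : Q.leadingCoeff = 1 := by
        have h1 : (Q.map (algebraMap ℝ ℂ)).leadingCoeff = 1 := by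
          rw [hQmap]
          exact ((Polynomial.monic_X_sub_C _).mul (Polynomial.monic_X_sub_C _)).leadingCoeff
        rw [Polynomial.leadingCoeff_map] at h1
        exact (algebraMap ℝ ℂ).injective (by rw [h1, map_one])
      have hqdeg : q.natDegree = n - 2 ∧ 2 ≤ n := by
        have h2 := congrArg Polynomial.natDegree hq
        rw [hn, Polynomial.natDegree_mul hQne hq0, hQnd] at h2
        omega
      have hhq : ∀ z : ℂ, (q.map (algebraMap ℝ ℂ)).eval z = 0 → z.re ≠ 0 := by
        intro z hz
        apply h z
        rw [hq, Polynomial.map_mul, Polynomial.eval_mul, hz, mul_zero]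
      have ihq := ih (n-2) (by omega) q hqdeg.1 hq0 hhq
      have hcount : orhpCount p = (if 0 < r.re then 2 else 0) + orhpCount q := by
        rw [hq, orhpCount_mul _ _ hQne hq0, hQdef, orhpCount_quad r him]
      have hr0 : r ≠ 0 := fun h' => him (by rw [h']; rfl)
      have hnorm : (0:ℝ) < ‖r‖ ^ 2 := pow_pos (norm_pos_iff.2 hr0) 2
      have heval : p.eval 0 = ‖r‖ ^ 2 * q.eval 0 := by
        rw [hq, hQdef]; simp
      have hlead : p.leadingCoeff = q.leadingCoeff := by
        rw [hq, Polynomial.leadingCoeff_mul, hQlead, one_mul]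
      rw [hcount, heval, hlead]
      have hpar : Even ((if 0 < r.re then 2 else 0) + orhpCount q) ↔ Even (orhpCount q) := by
        by_cases hc : 0 < r.re <;> simp [hc, Nat.even_add]
      rw [hpar, ihq, mul_assoc]
      constructor
      · intro h1; nlinarith
      · intro h1; nlinarith

lemma eval_abs_le (P : Polynomial ℂ) (z : ℂ) (hz : 1 ≤ ‖z‖) :
    ‖P.eval z‖ ≤
      (∑ i ∈ Finset.range (P.natDegree + 1), ‖P.coeff i‖) *
        ‖z‖ ^ P.natDegree := by
  rw [Polynomial.eval_eq_sum_range]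
  refine le_trans (norm_sum_le _ _) ?_
  rw [Finset.sum_mul]
  refine Finset.sum_le_sum fun i hi => ?_
  rw [norm_mul, norm_pow]
  exact mul_le_mul_of_nonneg_left
    (pow_le_pow_right₀ hz (Nat.lt_succ_iff.1 (Finset.mem_range.1 hi)))
    (norm_nonneg _)

lemma ratio_bound (N D : Polynomial ℂ) (hdeg : N.degree < D.degree) :
    ∃ R : ℝ, ∀ z : ℂ, R ≤ ‖z‖ →
      ‖N.eval z‖ ≤ ‖D.eval z‖ := by
  by_cases hN : N = 0
  · exact ⟨0, fun z _ => by simp [hN]⟩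
  have hD : D ≠ 0 := by rintro rfl; exact absurd hdeg (by simp)
  have hmn : N.natDegree < D.natDegree := Polynomial.natDegree_lt_natDegree hN hdeg
  set n := D.natDegree with hndef
  set c := ‖D.leadingCoeff‖ with hc
  have hcpos : 0 < c := norm_pos_iff.2 (Polynomial.leadingCoeff_ne_zero.2 hD)
  set E := D.eraseLead with hE
  set SN := ∑ i ∈ Finset.range (N.natDegree + 1), ‖N.coeff i‖ with hSN
  set SE := ∑ i ∈ Finset.range (E.natDegree + 1), ‖E.coeff i‖ with hSE
  have hSNn : 0 ≤ SN := Finset.sum_nonneg fun _ _ => norm_nonneg _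
  have hSEn : 0 ≤ SE := Finset.sum_nonneg fun _ _ => norm_nonneg _
  refine ⟨max 1 ((SE + SN + 1) / c), fun z hz => ?_⟩
  have hz1 : 1 ≤ ‖z‖ := le_trans (le_max_left _ _) hz
  have hzc : SE + SN + 1 ≤ c * ‖z‖ := by
    have hz2 : (SE + SN + 1) / c ≤ ‖z‖ := le_trans (le_max_right _ _) hz
    have h3 := (div_le_iff₀ hcpos).1 hz2
    nlinarith [h3]
  set A := ‖z‖ ^ (n - 1) with hA
  have hApos : 0 < A := pow_pos (lt_of_lt_of_le one_pos hz1) _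
  have hNle : ‖N.eval z‖ ≤ SN * A := by
    refine le_trans (eval_abs_le N z hz1) ?_
    exact mul_le_mul_of_nonneg_left (pow_le_pow_right₀ hz1 (by omega)) hSNn
  have hEle : ‖E.eval z‖ ≤ SE * A := by
    refine le_trans (eval_abs_le E z hz1) ?_
    exact mul_le_mul_of_nonneg_left
      (pow_le_pow_right₀ hz1 (Polynomial.eraseLead_natDegree_le D)) hSEn
  have hDeval : D.eval z = E.eval z + D.leadingCoeff * z ^ n := by
    conv_lhs => rw [← Polynomial.eraseLead_add_C_mul_X_pow D]
    rw [Polynomial.eval_add, Polynomial.eval_mul, Polynomial.eval_C, Polynomial.eval_pow,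
      Polynomial.eval_X]
  have h2 : ‖D.leadingCoeff * z ^ n‖ = c * (‖z‖ * A) := by
    have hzn : ‖z‖ * ‖z‖ ^ (n-1) = ‖z‖ ^ n := by
      rw [← pow_succ']
      congr 1
      omega
    rw [norm_mul, norm_pow, hA, ← hzn, hc]
  have h1 : ‖D.leadingCoeff * z ^ n‖ ≤
      ‖D.eval z‖ + ‖E.eval z‖ := by
    have h4 : D.leadingCoeff * z ^ n = D.eval z + -(E.eval z) := by rw [hDeval]; ring
    rw [h4]
    refine le_trans (norm_add_le _ _) ?_
    simp
  rw [h2] at h1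
  nlinarith [mul_le_mul_of_nonneg_right hzc (le_of_lt hApos)]

end AuxStmt16

/-- under the same hypotheses, `d_ℓ − γ n_ℓ` has no roots on the
imaginary axis and an even number (with multiplicity) of ORHP roots. -/
theorem stmt16 (γ : ℝ) (nl dl : Polynomial ℝ) (hdl : dl ≠ 0) (hcop : IsCoprime nl dl)
    (hsp : nl.degree < dl.degree)
    (heven : Even (orhpCount dl))
    (hnoimag : ∀ ω : ℝ, (dl.map (algebraMap ℝ ℂ)).eval ((ω : ℂ) * Complex.I) ≠ 0)
    (hγ : |γ| < 1)
    (hsg : (⨆ ω : ℝ, ‖(γ : ℂ) * ratEval nl dl ((ω : ℂ) * Complex.I)‖) < 1) :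
    (∀ z : ℂ, ((dl - Polynomial.C γ * nl).map (algebraMap ℝ ℂ)).eval z = 0 → z.re ≠ 0) ∧
    Even (orhpCount (dl - Polynomial.C γ * nl)) := by
  classical
  set f : ℝ → ℝ := fun ω => ‖(γ : ℂ) * ratEval nl dl ((ω : ℂ) * Complex.I)‖ with hf
  have hdegm : (nl.map (algebraMap ℝ ℂ)).degree < (dl.map (algebraMap ℝ ℂ)).degree := by
    rwa [Polynomial.degree_map, Polynomial.degree_map]
  obtain ⟨R, hR⟩ := ratio_bound _ _ hdegm
  set R' := max R 0 with hR'
  have hcont : Continuous f := by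
    have h1 : Continuous fun ω : ℝ => ((ω : ℂ) * Complex.I) :=
      Complex.continuous_ofReal.mul continuous_const
    have h2 : Continuous fun ω : ℝ =>
        (nl.map (algebraMap ℝ ℂ)).eval ((ω : ℂ) * Complex.I) :=
      (Polynomial.continuous _).comp h1
    have h3 : Continuous fun ω : ℝ =>
        (dl.map (algebraMap ℝ ℂ)).eval ((ω : ℂ) * Complex.I) :=
      (Polynomial.continuous _).comp h1
    have h4 : Continuous fun ω : ℝ => ratEval nl dl ((ω : ℂ) * Complex.I) :=
      h2.div h3 fun ω => hnoimag ω
    exact continuous_norm.comp (continuous_const.mul h4)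
  obtain ⟨C0, hC0⟩ :=
    (isCompact_Icc (a := -R') (b := R')).exists_bound_of_continuousOn hcont.continuousOn
  have hbd : ∀ ω : ℝ, f ω ≤ max C0 1 := by
    intro ω
    by_cases hω : |ω| ≤ R'
    · refine le_trans ?_ (le_max_left _ _)
      have hmem : ω ∈ Set.Icc (-R') R' := by
        rcases abs_le.1 hω with ⟨ha, hb⟩; exact ⟨ha, hb⟩
      have := hC0 ω hmem
      calc f ω ≤ ‖f ω‖ := le_abs_self _
        _ ≤ C0 := this
    · refine le_trans ?_ (le_max_right _ _)
      have hωR : R ≤ ‖(ω : ℂ) * Complex.I‖ := by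
        rw [norm_mul, Complex.norm_I, Complex.norm_real, Real.norm_eq_abs, mul_one]
        have h5 : R ≤ R' := le_max_left _ _
        linarith [not_le.1 hω]
      have hle := hR _ hωR
      have hDpos : 0 < ‖(dl.map (algebraMap ℝ ℂ)).eval ((ω : ℂ) * Complex.I)‖ :=
        norm_pos_iff.2 (hnoimag ω)
      have hfω : f ω = ‖(γ : ℂ)‖ *
          (‖(nl.map (algebraMap ℝ ℂ)).eval ((ω : ℂ) * Complex.I)‖ /
            ‖(dl.map (algebraMap ℝ ℂ)).eval ((ω : ℂ) * Complex.I)‖) := by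
        rw [hf]
        simp [ratEval, norm_mul, norm_div]
      rw [hfω]
      have hγ1 : ‖(γ : ℂ)‖ ≤ 1 := by
        rw [Complex.norm_real, Real.norm_eq_abs]; exact le_of_lt hγ
      have hdiv : ‖(nl.map (algebraMap ℝ ℂ)).eval ((ω : ℂ) * Complex.I)‖ /
          ‖(dl.map (algebraMap ℝ ℂ)).eval ((ω : ℂ) * Complex.I)‖ ≤ 1 :=
        (div_le_one hDpos).2 hle
      calc ‖(γ : ℂ)‖ * _ ≤ 1 * 1 :=
            mul_le_mul hγ1 hdiv (by positivity) (by norm_num)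
        _ = 1 := by norm_num
  have hBdd : BddAbove (Set.range f) := ⟨max C0 1, by rintro y ⟨ω, rfl⟩; exact hbd ω⟩
  have hpt : ∀ ω : ℝ, f ω < 1 := fun ω => lt_of_le_of_lt (le_ciSup hBdd ω) hsg
  have hnoim : ∀ z : ℂ, ((dl - Polynomial.C γ * nl).map (algebraMap ℝ ℂ)).eval z = 0 →
      z.re ≠ 0 := by
    intro z hz hz0
    have hzw : z = ((z.im : ℝ) : ℂ) * Complex.I := by
      apply Complex.ext <;> simp [hz0]
    have hDz : (dl.map (algebraMap ℝ ℂ)).eval z ≠ 0 := by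
      rw [hzw]; exact hnoimag z.im
    have hev : (dl.map (algebraMap ℝ ℂ)).eval z -
        (γ : ℂ) * (nl.map (algebraMap ℝ ℂ)).eval z = 0 := by
      have h6 := hz
      rw [Polynomial.map_sub, Polynomial.map_mul, Polynomial.map_C, Polynomial.eval_sub,
        Polynomial.eval_mul, Polynomial.eval_C] at h6
      exact h6
    have h1 : f z.im = 1 := by
      rw [hf]
      simp only [ratEval]
      rw [← hzw, ← mul_div_assoc,
        show (γ : ℂ) * (nl.map (algebraMap ℝ ℂ)).eval z = (dl.map (algebraMap ℝ ℂ)).eval z from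
          (sub_eq_zero.mp hev).symm,
        div_self hDz, norm_one]
    linarith [hpt z.im, h1]
  refine ⟨hnoim, ?_⟩
  have hdlt : (Polynomial.C γ * nl).degree < dl.degree := by
    calc (Polynomial.C γ * nl).degree ≤ (Polynomial.C γ).degree + nl.degree :=
          Polynomial.degree_mul_le _ _
      _ ≤ 0 + nl.degree := add_le_add Polynomial.degree_C_le le_rfl
      _ = nl.degree := zero_add _
      _ < dl.degree := hsp
  have hdegsub : (dl - Polynomial.C γ * nl).degree = dl.degree :=
    Polynomial.degree_sub_eq_left_of_degree_lt hdlt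
  have hsubne : dl - Polynomial.C γ * nl ≠ 0 := by
    intro h'
    rw [h', Polynomial.degree_zero] at hdegsub
    exact hdl (Polynomial.degree_eq_bot.1 hdegsub.symm)
  have hleadsub : (dl - Polynomial.C γ * nl).leadingCoeff = dl.leadingCoeff :=
    Polynomial.leadingCoeff_sub_of_degree_lt hdlt
  have hnoim_dl : ∀ z : ℂ, (dl.map (algebraMap ℝ ℂ)).eval z = 0 → z.re ≠ 0 := by
    intro z hz hz0
    have hzw : z = ((z.im : ℝ) : ℂ) * Complex.I := by
      apply Complex.ext <;> simp [hz0]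
    exact hnoimag z.im (by rw [← hzw]; exact hz)
  have hdlsign : 0 < dl.eval 0 * dl.leadingCoeff :=
    (even_orhp_iff dl.natDegree dl rfl hdl hnoim_dl).1 heven
  have hdl0 : dl.eval 0 ≠ 0 := by
    intro h'
    apply hnoimag 0
    rw [show (((0:ℝ) : ℂ)) * Complex.I = (((0:ℝ) : ℂ)) by simp, mapCeval]
    simp [h']
  have habs : |γ * nl.eval 0| < |dl.eval 0| := by
    have hf0 : f 0 < 1 := hpt 0
    have hfeq : f 0 = |γ * nl.eval 0 / dl.eval 0| := by
      rw [hf]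
      simp only [ratEval]
      rw [show (((0:ℝ) : ℂ)) * Complex.I = (((0:ℝ) : ℂ)) by simp, mapCeval, mapCeval]
      rw [show (γ : ℂ) * (((nl.eval 0 : ℝ) : ℂ) / ((dl.eval 0 : ℝ) : ℂ)) =
          (((γ * nl.eval 0 / dl.eval 0 : ℝ)) : ℂ) by push_cast; ring]
      rw [Complex.norm_real, Real.norm_eq_abs]
    rw [hfeq, abs_div] at hf0
    exact (div_lt_one (abs_pos.2 hdl0)).1 hf0
  have hsign2 : 0 < (dl.eval 0 - γ * nl.eval 0) * dl.eval 0 := by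
    nlinarith [mul_self_lt_mul_self (abs_nonneg (γ * nl.eval 0)) habs,
      abs_mul_abs_self (γ * nl.eval 0), abs_mul_abs_self (dl.eval 0),
      sq_nonneg (dl.eval 0 - γ * nl.eval 0)]
  apply (even_orhp_iff _ (dl - Polynomial.C γ * nl) rfl hsubne hnoim).2
  rw [hleadsub, show (dl - Polynomial.C γ * nl).eval 0 = dl.eval 0 - γ * nl.eval 0 by simp]
  nlinarith [mul_pos hsign2 hdlsign, sq_nonneg (dl.eval 0)]
end

section
/- Let α₁, α₂, α₃ > 0 and β₁, β₂, β₃ > 0 be real numbers, and for i = 1, 2, 3 let ψ_i : [0, ∞) → ℝ be continuous, strictly decreasing, and satisfy ψ_i(x) > 0 for all x ≥ 0. Then there exists a unique triple (x₁, x₂, x₃) with x_i > 0 for all i satisfying the equilibrium equations α_i x_i = β_i ψ_i(x_{i−1}) for i = 1, 2, 3, where indices are taken modulo 3 (x₀ := x₃). -/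
/-- the repressilator has a unique equilibrium in the positive orthant:
with `α_i, β_i > 0` and `ψ_i` continuous, strictly decreasing, and positive on `[0,∞)`,
there is a unique positive triple with `α_i x_i = β_i ψ_i(x_{i−1})` (indices mod 3). -/
theorem stmt19 (α₁ α₂ α₃ β₁ β₂ β₃ : ℝ)
    (hα₁ : 0 < α₁) (hα₂ : 0 < α₂) (hα₃ : 0 < α₃)
    (hβ₁ : 0 < β₁) (hβ₂ : 0 < β₂) (hβ₃ : 0 < β₃)
    (ψ₁ ψ₂ ψ₃ : ℝ → ℝ)
    (hc₁ : ContinuousOn ψ₁ (Set.Ici 0)) (hc₂ : ContinuousOn ψ₂ (Set.Ici 0))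
    (hc₃ : ContinuousOn ψ₃ (Set.Ici 0))
    (ha₁ : StrictAntiOn ψ₁ (Set.Ici 0)) (ha₂ : StrictAntiOn ψ₂ (Set.Ici 0))
    (ha₃ : StrictAntiOn ψ₃ (Set.Ici 0))
    (hp₁ : ∀ x : ℝ, 0 ≤ x → 0 < ψ₁ x) (hp₂ : ∀ x : ℝ, 0 ≤ x → 0 < ψ₂ x)
    (hp₃ : ∀ x : ℝ, 0 ≤ x → 0 < ψ₃ x) :
    ∃! x : ℝ × ℝ × ℝ, (0 < x.1 ∧ 0 < x.2.1 ∧ 0 < x.2.2) ∧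
      α₁ * x.1 = β₁ * ψ₁ x.2.2 ∧ α₂ * x.2.1 = β₂ * ψ₂ x.1 ∧
      α₃ * x.2.2 = β₃ * ψ₃ x.2.1 := by
  -- the induced maps
  set u : ℝ → ℝ := fun x => β₂ / α₂ * ψ₂ x with hu
  set v : ℝ → ℝ := fun x => β₃ / α₃ * ψ₃ (u x) with hv
  set h : ℝ → ℝ := fun x => β₁ * ψ₁ (v x) - α₁ * x with hh
  have hupos : ∀ x : ℝ, 0 ≤ x → 0 < u x := fun x hx =>
    mul_pos (div_pos hβ₂ hα₂) (hp₂ x hx)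
  have hvpos : ∀ x : ℝ, 0 ≤ x → 0 < v x := fun x hx =>
    mul_pos (div_pos hβ₃ hα₃) (hp₃ _ (hupos x hx).le)
  -- strict antitonicity of h
  have hanti : StrictAntiOn h (Set.Ici 0) := by
    intro a ha b hb hab
    have h2 : ψ₂ b < ψ₂ a := ha₂ ha hb hab
    have hub : u b < u a := by
      exact mul_lt_mul_of_pos_left h2 (div_pos hβ₂ hα₂)
    have h3 : ψ₃ (u a) < ψ₃ (u b) := ha₃ (hupos b hb).le (hupos a ha).le hub
    have hvb : v a < v b := mul_lt_mul_of_pos_left h3 (div_pos hβ₃ hα₃)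
    have h1 : ψ₁ (v b) < ψ₁ (v a) := ha₁ (hvpos a ha).le (hvpos b hb).le hvb
    have : β₁ * ψ₁ (v b) < β₁ * ψ₁ (v a) := mul_lt_mul_of_pos_left h1 hβ₁
    have : α₁ * a < α₁ * b := mul_lt_mul_of_pos_left hab hα₁
    simp only [hh]
    nlinarith [mul_lt_mul_of_pos_left h1 hβ₁]
  -- continuity of h on Ici 0
  have hucont : ContinuousOn u (Set.Ici 0) := continuousOn_const.mul hc₂
  have humaps : Set.MapsTo u (Set.Ici 0) (Set.Ici 0) := fun x hx => (hupos x hx).le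
  have hvcont : ContinuousOn v (Set.Ici 0) :=
    continuousOn_const.mul (hc₃.comp hucont humaps)
  have hvmaps : Set.MapsTo v (Set.Ici 0) (Set.Ici 0) := fun x hx => (hvpos x hx).le
  have hcont : ContinuousOn h (Set.Ici 0) :=
    (continuousOn_const.mul (hc₁.comp hvcont hvmaps)).sub
      (continuousOn_const.mul continuousOn_id)
  -- sign at endpoints
  set M : ℝ := (β₁ * ψ₁ 0) / α₁ + 1 with hM
  have hψ₁0 : 0 < ψ₁ 0 := hp₁ 0 le_rfl
  have hMpos : 0 < M := by positivity
  have hh0 : 0 < h 0 := by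
    simp only [hh]
    have := hp₁ _ (hvpos 0 le_rfl).le
    nlinarith
  have hhM : h M < 0 := by
    have hle : ψ₁ (v M) ≤ ψ₁ 0 := by
      rcases eq_or_lt_of_le (hvpos M hMpos.le).le with heq | hlt
      · rw [← heq]
      · exact (ha₁ (Set.mem_Ici.mpr le_rfl) (hvpos M hMpos.le).le hlt).le
    simp only [hh, hM]
    have : α₁ * ((β₁ * ψ₁ 0) / α₁ + 1) = β₁ * ψ₁ 0 + α₁ := by
      field_simp
    nlinarith
  -- IVT: find root c ∈ [0, M]
  have hsub : Set.Icc (0:ℝ) M ⊆ Set.Ici 0 := Set.Icc_subset_Ici_self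
  have hivt := intermediate_value_Icc' hMpos.le (hcont.mono hsub)
  have h0mem : (0:ℝ) ∈ Set.Icc (h M) (h 0) := ⟨hhM.le, hh0.le⟩
  obtain ⟨c, hcmem, hc0⟩ := hivt h0mem
  have hcpos : 0 < c := by
    rcases eq_or_lt_of_le hcmem.1 with heq | hlt
    · exfalso; rw [← heq] at hc0; rw [hc0] at hh0; exact lt_irrefl _ hh0
    · exact hlt
  -- the equilibrium
  refine ⟨(c, u c, v c), ⟨⟨hcpos, hupos c hcpos.le, hvpos c hcpos.le⟩, ?_, ?_, ?_⟩, ?_⟩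
  · have : β₁ * ψ₁ (v c) - α₁ * c = 0 := hc0
    linarith
  · simp only [hu]; field_simp
  · simp only [hv]; field_simp
  · rintro ⟨x₁, x₂, x₃⟩ ⟨⟨hx₁, hx₂, hx₃⟩, he₁, he₂, he₃⟩
    simp only at he₁ he₂ he₃ ⊢
    have hx₂eq : x₂ = u x₁ := by
      simp only [hu]; field_simp; linarith [he₂]
    have hx₃eq : x₃ = v x₁ := by
      simp only [hv, ← hx₂eq]; field_simp; linarith [he₃]
    have hroot : h x₁ = 0 := by
      simp only [hh, ← hx₃eq]; linarith [he₁]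
    have hx₁c : x₁ = c := by
      apply hanti.injOn hx₁.le (hsub hcmem)
      rw [hroot, hc0]
    rw [hx₂eq, hx₃eq, hx₁c]
end
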